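/- Let X be a real-valued random variable with E X = 0, E X² ≤ σ², and X ≤ d almost surely, where σ > 0, d > 0. Fix t ∈ ℝ, set a := σ²/d² and t_a := min(t, -a·d) (in units where d = 1, t_a := min(t, -a)). Then, working with d = 1: for all x ≤ 1, (x - t)₊² ≤ ((1-t)₊²/(1-t_a)²)·(x - t_a)², with equality at x = 1 and x = -a. -/

import Mathlib

theorem stmt_2 (σ t : ℝ) (hσ : 0 < σ) (a ta : ℝ) (ha : a = σ ^ 2)
    (hta : ta = min t (-a)) :
    (∀ x : ℝ, x ≤ 1 →
      (max (x - t) 0) ^ 2 ≤ (max (1 - t) 0) ^ 2 / (1 - ta) ^ 2 * (x - ta) ^ 2) ∧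
    (max (1 - t) 0) ^ 2 = (max (1 - t) 0) ^ 2 / (1 - ta) ^ 2 * (1 - ta) ^ 2 ∧
    (max (-a - t) 0) ^ 2 = (max (1 - t) 0) ^ 2 / (1 - ta) ^ 2 * (-a - ta) ^ 2 := by
  have hapos : 0 < a := by rw [ha]; positivity
  have hta' : ta ≤ -a := by rw [hta]; exact min_le_right _ _
  have htat : ta ≤ t := by rw [hta]; exact min_le_left _ _
  have h1ta : 0 < 1 - ta := by linarith
  have h1ta2 : (1 - ta) ^ 2 ≠ 0 := by positivity
  refine ⟨?_, ?_, ?_⟩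
  · intro x hx
    rcases le_or_gt x t with h | h
    · rw [max_eq_right (by linarith : x - t ≤ 0)]
      have h0 : (0:ℝ) ≤ (max (1 - t) 0) ^ 2 / (1 - ta) ^ 2 * (x - ta) ^ 2 := by positivity
      simpa using h0
    · rw [max_eq_left (by linarith : (0:ℝ) ≤ x - t)]
      have hxta : 0 < x - ta := by linarith
      have key : (x - t) * (1 - ta) ≤ (max (1 - t) 0) * (x - ta) := by
        rcases le_or_gt t 1 with h1 | h1
        · rw [max_eq_left (by linarith : (0:ℝ) ≤ 1 - t)]
          nlinarith [mul_nonneg (by linarith : (0:ℝ) ≤ t - ta) (by linarith : (0:ℝ) ≤ 1 - x)]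
        · linarith
      have hA : 0 ≤ (x - t) * (1 - ta) := mul_nonneg (by linarith) (by linarith)
      have hsq : ((x - t) * (1 - ta)) ^ 2 ≤ ((max (1 - t) 0) * (x - ta)) ^ 2 :=
        pow_le_pow_left₀ hA key 2
      rw [div_mul_eq_mul_div, le_div_iff₀ (by positivity : (0:ℝ) < (1 - ta) ^ 2)]
      nlinarith [hsq]
  · field_simp
  · rcases le_or_gt t (-a) with h | h
    · have hteq : ta = t := by rw [hta]; exact min_eq_left h
      rw [hteq, max_eq_left (by linarith : (0:ℝ) ≤ -a - t),
        max_eq_left (by linarith : (0:ℝ) ≤ 1 - t)]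
      have h1t : (1 - t) ^ 2 ≠ 0 := pow_ne_zero _ (by linarith : (1:ℝ) - t ≠ 0)
      field_simp
      rw [mul_div_assoc, div_self (by linarith : (1:ℝ) - t ≠ 0), mul_one]
    · have hta0 : ta = -a := by rw [hta]; exact min_eq_right h.le
      rw [hta0, max_eq_right (by linarith : -a - t ≤ 0)]
      ring_nf
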